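/- Let G be a graph of order n such that G is not isomorphic to K₃ ∪ (n−3)K₁ when n ≥ 3, and G is not isomorphic to K₃ ∪ K₂ ∪ (n−5)K₁ when n ≥ 5. Then the maximum number of pairwise edge-disjoint edge-pairs in G equals ⌊|E(G)|/2⌋ if |E(G)| ≥ 2Δ(G), and equals |E(G)| − Δ(G) if |E(G)| < 2Δ(G). -/

import Mathlib

open SimpleGraph

/-- A finset `s` of edges is an edge-pair of `G` if it consists of two distinct edges of
`G` sharing no common endpoint (i.e. two independent edges). -/
def IsEdgePair {V : Type*} [DecidableEq V] (G : SimpleGraph V) (s : Finset (Sym2 V)) :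
    Prop :=
  ∃ e f : Sym2 V, e ∈ G.edgeSet ∧ f ∈ G.edgeSet ∧ e ≠ f ∧
    (∀ v : V, ¬(v ∈ e ∧ v ∈ f)) ∧ s = {e, f}


open Finset
set_option linter.unusedSectionVars false
set_option maxHeartbeats 1000000

namespace EPP

variable {V : Type*} [Fintype V] [DecidableEq V]

def Indep {V : Type*} (e f : Sym2 V) : Prop := ∀ v : V, ¬(v ∈ e ∧ v ∈ f)

lemma Indep.ne {e f : Sym2 V} (h : Indep e f) : e ≠ f := by
  rintro rfl
  induction e using Sym2.ind with
  | _ x y => exact h x ⟨Sym2.mem_mk_left x y, Sym2.mem_mk_left x y⟩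

def Good (G : SimpleGraph V) (P : Finset (Finset (Sym2 V))) : Prop :=
  (∀ s ∈ P, IsEdgePair G s) ∧ (P : Set (Finset (Sym2 V))).PairwiseDisjoint id

lemma good_mk1 (G : SimpleGraph V) {x1 y1 : Sym2 V}
    (h1 : x1 ∈ G.edgeSet) (h2 : y1 ∈ G.edgeSet) (hi : Indep x1 y1) :
    ∃ P : Finset (Finset (Sym2 V)), Good G P ∧ P.card = 1 := by
  refine ⟨{({x1, y1} : Finset (Sym2 V))}, ⟨?_, ?_⟩, rfl⟩
  · intro s hs
    simp only [mem_singleton] at hs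
    exact ⟨x1, y1, h1, h2, hi.ne, hi, hs⟩
  · simp

lemma good_mk2 (G : SimpleGraph V) {x1 y1 x2 y2 : Sym2 V}
    (hx1 : x1 ∈ G.edgeSet) (hy1 : y1 ∈ G.edgeSet) (hx2 : x2 ∈ G.edgeSet)
    (hy2 : y2 ∈ G.edgeSet) (i1 : Indep x1 y1) (i2 : Indep x2 y2)
    (d11 : x1 ≠ x2) (d12 : x1 ≠ y2) (d21 : y1 ≠ x2) (d22 : y1 ≠ y2) :
    ∃ P : Finset (Finset (Sym2 V)), Good G P ∧ P.card = 2 := by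
  refine ⟨{({x1, y1} : Finset (Sym2 V)), {x2, y2}}, ⟨?_, ?_⟩, ?_⟩
  · intro s hs
    simp only [mem_insert, mem_singleton] at hs
    rcases hs with rfl | rfl
    · exact ⟨x1, y1, hx1, hy1, i1.ne, i1, rfl⟩
    · exact ⟨x2, y2, hx2, hy2, i2.ne, i2, rfl⟩
  · have hd : Disjoint ({x1, y1} : Finset (Sym2 V)) {x2, y2} := by
      simp only [Finset.disjoint_left, mem_insert, mem_singleton]
      rintro a (rfl | rfl) h <;> tauto
    intro a ha b hb hne
    simp only [coe_insert, Set.mem_insert_iff, coe_singleton, Set.mem_singleton_iff] at ha hb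
    rcases ha with rfl | rfl <;> rcases hb with rfl | rfl <;>
      first | exact absurd rfl hne | exact hd | exact hd.symm
  · rw [card_insert_of_notMem, card_singleton]
    simp only [mem_singleton]
    intro h
    have : x1 ∈ ({x2, y2} : Finset (Sym2 V)) := h ▸ by simp
    simp only [mem_insert, mem_singleton] at this
    tauto

lemma good_mk3 (G : SimpleGraph V) {x1 y1 x2 y2 x3 y3 : Sym2 V}
    (hx1 : x1 ∈ G.edgeSet) (hy1 : y1 ∈ G.edgeSet) (hx2 : x2 ∈ G.edgeSet)
    (hy2 : y2 ∈ G.edgeSet) (hx3 : x3 ∈ G.edgeSet) (hy3 : y3 ∈ G.edgeSet)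
    (i1 : Indep x1 y1) (i2 : Indep x2 y2) (i3 : Indep x3 y3)
    (d1 : x1 ≠ x2) (d2 : x1 ≠ y2) (d3 : y1 ≠ x2) (d4 : y1 ≠ y2)
    (d5 : x1 ≠ x3) (d6 : x1 ≠ y3) (d7 : y1 ≠ x3) (d8 : y1 ≠ y3)
    (d9 : x2 ≠ x3) (d10 : x2 ≠ y3) (d11 : y2 ≠ x3) (d12 : y2 ≠ y3) :
    ∃ P : Finset (Finset (Sym2 V)), Good G P ∧ P.card = 3 := by
  refine ⟨{({x1, y1} : Finset (Sym2 V)), {x2, y2}, {x3, y3}}, ⟨?_, ?_⟩, ?_⟩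
  · intro s hs
    simp only [mem_insert, mem_singleton] at hs
    rcases hs with rfl | rfl | rfl
    · exact ⟨x1, y1, hx1, hy1, i1.ne, i1, rfl⟩
    · exact ⟨x2, y2, hx2, hy2, i2.ne, i2, rfl⟩
    · exact ⟨x3, y3, hx3, hy3, i3.ne, i3, rfl⟩
  · have hd12 : Disjoint ({x1, y1} : Finset (Sym2 V)) {x2, y2} := by
      simp only [Finset.disjoint_left, mem_insert, mem_singleton]
      rintro a (rfl | rfl) h <;> tauto
    have hd13 : Disjoint ({x1, y1} : Finset (Sym2 V)) {x3, y3} := by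
      simp only [Finset.disjoint_left, mem_insert, mem_singleton]
      rintro a (rfl | rfl) h <;> tauto
    have hd23 : Disjoint ({x2, y2} : Finset (Sym2 V)) {x3, y3} := by
      simp only [Finset.disjoint_left, mem_insert, mem_singleton]
      rintro a (rfl | rfl) h <;> tauto
    intro a ha b hb hne
    simp only [coe_insert, Set.mem_insert_iff, coe_singleton, Set.mem_singleton_iff] at ha hb
    rcases ha with rfl | rfl | rfl <;> rcases hb with rfl | rfl | rfl <;>
      first | exact absurd rfl hne | exact hd12 | exact hd12.symm | exact hd13 |
        exact hd13.symm | exact hd23 | exact hd23.symm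
  · have m1 : ({x1, y1} : Finset (Sym2 V)) ∉ ({({x2, y2} : Finset (Sym2 V)), {x3, y3}} : Finset (Finset (Sym2 V))) := by
      simp only [mem_insert, mem_singleton]
      rintro (h | h) <;>
      · have : x1 ∈ ({x1, y1} : Finset (Sym2 V)) := by simp
        rw [h] at this
        simp only [mem_insert, mem_singleton] at this
        tauto
    have m2 : ({x2, y2} : Finset (Sym2 V)) ∉ ({({x3, y3} : Finset (Sym2 V))} : Finset (Finset (Sym2 V))) := by
      simp only [mem_singleton]
      intro h
      have : x2 ∈ ({x2, y2} : Finset (Sym2 V)) := by simp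
      rw [h] at this
      simp only [mem_insert, mem_singleton] at this
      tauto
    rw [card_insert_of_notMem m1, card_insert_of_notMem m2, card_singleton]


lemma mem_incF (G : SimpleGraph V) [DecidableRel G.Adj] {v : V} {e : Sym2 V} :
    e ∈ G.incidenceFinset v ↔ e ∈ G.edgeSet ∧ v ∈ e := by
  rw [mem_incidenceFinset]; exact Iff.rfl

lemma incF_subset (G : SimpleGraph V) [DecidableRel G.Adj] (v : V) :
    G.incidenceFinset v ⊆ G.edgeFinset := by
  intro e he
  rw [mem_incF] at he
  exact mem_edgeFinset.2 he.1

lemma degree_le_card_edges (G : SimpleGraph V) [DecidableRel G.Adj] (v : V) :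
    G.degree v ≤ #G.edgeFinset := by
  rw [← card_incidenceFinset_eq_degree]
  exact card_le_card (incF_subset G v)

lemma maxDegree_le_card_edges (G : SimpleGraph V) [DecidableRel G.Adj] :
    G.maxDegree ≤ #G.edgeFinset := by
  rcases isEmpty_or_nonempty V with h | h
  · simp [SimpleGraph.maxDegree, Finset.univ_eq_empty]
  · obtain ⟨v, hv⟩ := G.exists_maximal_degree_vertex
    rw [hv]; exact degree_le_card_edges G v

lemma exists_rep {G : SimpleGraph V} {e : Sym2 V} (he : e ∈ G.edgeSet) :
    ∃ x y : V, x ≠ y ∧ e = s(x, y) := by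
  induction e using Sym2.ind with
  | _ x y => exact ⟨x, y, ((SimpleGraph.mem_edgeSet (G := G)).1 he).ne, rfl⟩

lemma exists_indep_partner (G : SimpleGraph V) [DecidableRel G.Adj]
    (h2d : 2 * G.maxDegree ≤ #G.edgeFinset) {e : Sym2 V} (he : e ∈ G.edgeSet) :
    ∃ f ∈ G.edgeSet, Indep e f := by
  obtain ⟨x, y, hxy, rfl⟩ := exists_rep he
  set A := G.incidenceFinset x with hA
  set B := G.incidenceFinset y with hB
  have hmemA : s(x, y) ∈ A := (mem_incF G).2 ⟨he, by simp⟩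
  have hmemB : s(x, y) ∈ B := (mem_incF G).2 ⟨he, by simp⟩
  have hinter : 1 ≤ #(A ∩ B) := card_pos.2 ⟨s(x, y), mem_inter.2 ⟨hmemA, hmemB⟩⟩
  have hcard : #(A ∪ B) + 1 ≤ #A + #B := by
    have := card_union_add_card_inter A B
    omega
  have hAd : #A = G.degree x := G.card_incidenceFinset_eq_degree x
  have hBd : #B = G.degree y := G.card_incidenceFinset_eq_degree y
  have hlt : #(A ∪ B) < #G.edgeFinset := by
    have h1 : G.degree x ≤ G.maxDegree := G.degree_le_maxDegree x
    have h2 : G.degree y ≤ G.maxDegree := G.degree_le_maxDegree y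
    omega
  have hne : (G.edgeFinset \ (A ∪ B)).Nonempty := by
    rw [← card_pos]
    have hsub : A ∪ B ⊆ G.edgeFinset := union_subset (incF_subset G x) (incF_subset G y)
    have := card_sdiff_of_subset hsub
    omega
  obtain ⟨f, hf⟩ := hne
  rw [mem_sdiff] at hf
  refine ⟨f, mem_edgeFinset.1 hf.1, ?_⟩
  intro v ⟨hv1, hv2⟩
  rw [Sym2.mem_iff] at hv1
  apply hf.2
  rcases hv1 with rfl | rfl
  · exact mem_union_left _ ((mem_incF G).2 ⟨mem_edgeFinset.1 hf.1, hv2⟩)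
  · exact mem_union_right _ ((mem_incF G).2 ⟨mem_edgeFinset.1 hf.1, hv2⟩)


def delInst (G : SimpleGraph V) [DecidableRel G.Adj] (s : Finset (Sym2 V)) :
    DecidableRel (G.deleteEdges (↑s : Set (Sym2 V))).Adj := fun a b =>
  decidable_of_iff (G.Adj a b ∧ s(a, b) ∉ s) (by simp)

lemma edgeFinset_del (G : SimpleGraph V) [DecidableRel G.Adj] (s : Finset (Sym2 V))
    [DecidableRel (G.deleteEdges (↑s : Set (Sym2 V))).Adj] :
    (G.deleteEdges (↑s : Set (Sym2 V))).edgeFinset = G.edgeFinset \ s := by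
  ext e
  simp [edgeSet_deleteEdges]

lemma degree_del_le (G : SimpleGraph V) [DecidableRel G.Adj] (s : Finset (Sym2 V))
    [DecidableRel (G.deleteEdges (↑s : Set (Sym2 V))).Adj] (z : V) :
    (G.deleteEdges (↑s : Set (Sym2 V))).degree z ≤ G.degree z := by
  apply card_le_card
  intro b hb
  rw [mem_neighborFinset] at hb ⊢
  exact hb.1

lemma degree_del_lt (G : SimpleGraph V) [DecidableRel G.Adj] (s : Finset (Sym2 V))
    [DecidableRel (G.deleteEdges (↑s : Set (Sym2 V))).Adj]
    {e : Sym2 V} (he : e ∈ G.edgeSet) (hes : e ∈ s) {z : V} (hz : z ∈ e) :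
    (G.deleteEdges (↑s : Set (Sym2 V))).degree z + 1 ≤ G.degree z := by
  classical
  obtain ⟨w, hw⟩ : ∃ w, s(z, w) = e := ⟨Sym2.Mem.other hz, Sym2.other_spec hz⟩
  have hadj : G.Adj z w := (SimpleGraph.mem_edgeSet (G := G)).1 (hw ▸ he)
  have hwmem : w ∈ G.neighborFinset z := (mem_neighborFinset _ _ _).2 hadj
  have hsub : (G.deleteEdges (↑s : Set (Sym2 V))).neighborFinset z ⊆
      (G.neighborFinset z).erase w := by
    intro b hb
    rw [mem_neighborFinset, deleteEdges_adj] at hb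
    rw [mem_erase, mem_neighborFinset]
    refine ⟨?_, hb.1⟩
    rintro rfl
    exact hb.2 (by rw [hw]; exact hes)
  have h1 : (G.deleteEdges (↑s : Set (Sym2 V))).degree z ≤ #((G.neighborFinset z).erase w) :=
    card_le_card hsub
  rw [card_erase_of_mem hwmem] at h1
  have h2 : 1 ≤ #(G.neighborFinset z) := card_pos.2 ⟨w, hwmem⟩
  have h3 : G.degree z = #(G.neighborFinset z) := rfl
  omega

lemma isEdgePair_mono {G G' : SimpleGraph V} (h : G ≤ G') {s : Finset (Sym2 V)} :
    IsEdgePair G s → IsEdgePair G' s := by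
  rintro ⟨e, f, he, hf, hne, hind, rfl⟩
  exact ⟨e, f, edgeSet_mono h he, edgeSet_mono h hf, hne, hind, rfl⟩


lemma indep_of_avoid {e : Sym2 V} {x y : V} (hx : x ∉ e) (hy : y ∉ e) :
    Indep e s(x, y) := by
  rintro v ⟨hv1, hv2⟩
  rw [Sym2.mem_iff] at hv2
  rcases hv2 with rfl | rfl
  exacts [hx hv1, hy hv1]

lemma indep_symm {e f : Sym2 V} (h : Indep e f) : Indep f e := fun v hv => h v ⟨hv.2, hv.1⟩

lemma two_mem_eq {e : Sym2 V} {p q : V} (hp : p ∈ e) (hq : q ∈ e) (h : p ≠ q) :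
    e = s(p, q) := (Sym2.mem_and_mem_iff h).1 ⟨hp, hq⟩

lemma avoid_two {a b c : V} (hab : a ≠ b) (hac : a ≠ c) (hbc : b ≠ c) {e : Sym2 V}
    (h1 : e ≠ s(a, b)) (h2 : e ≠ s(a, c)) (h3 : e ≠ s(b, c)) :
    (b ∉ e ∧ c ∉ e) ∨ (a ∉ e ∧ c ∉ e) ∨ (a ∉ e ∧ b ∉ e) := by
  by_cases ha : a ∈ e <;> by_cases hb : b ∈ e <;> by_cases hc : c ∈ e
  · exact absurd (two_mem_eq ha hb hab) h1
  · exact absurd (two_mem_eq ha hb hab) h1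
  · exact absurd (two_mem_eq ha hc hac) h2
  · exact Or.inl ⟨hb, hc⟩
  · exact absurd (two_mem_eq hb hc hbc) h3
  · exact Or.inr (Or.inl ⟨ha, hc⟩)
  · exact Or.inr (Or.inr ⟨ha, hb⟩)
  · exact Or.inl ⟨hb, hc⟩

lemma card_le_sub {α : Type*} [DecidableEq α] {s S m : Finset α} (h1 : s ⊆ S)
    (h2 : ∀ x ∈ m, x ∉ s) (h3 : m ⊆ S) : #s + #m ≤ #S := by
  have hsub : s ⊆ S \ m := fun x hx => mem_sdiff.2 ⟨h1 hx, fun hm => h2 _ hm hx⟩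
  have := card_le_card hsub
  rw [card_sdiff_of_subset h3] at this
  have := card_le_card h3
  omega

lemma matchTwo {a b c : V} (hab : a ≠ b) (hac : a ≠ c) (hbc : b ≠ c) {e f : Sym2 V}
    (hef : Indep e f)
    (he2 : (b ∉ e ∧ c ∉ e) ∨ (a ∉ e ∧ c ∉ e) ∨ (a ∉ e ∧ b ∉ e))
    (hf2 : (b ∉ f ∧ c ∉ f) ∨ (a ∉ f ∧ c ∉ f) ∨ (a ∉ f ∧ b ∉ f)) :
    ∃ t1 t2 t3 : Sym2 V,
      t1 ∈ ({s(a, b), s(a, c), s(b, c)} : Finset (Sym2 V)) ∧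
      t2 ∈ ({s(a, b), s(a, c), s(b, c)} : Finset (Sym2 V)) ∧
      t3 ∈ ({s(a, b), s(a, c), s(b, c)} : Finset (Sym2 V)) ∧
      t1 ≠ t2 ∧ t1 ≠ t3 ∧ t2 ≠ t3 ∧ Indep e t1 ∧ Indep f t2 := by
  have nab : s(a, b) ≠ s(a, c) := by simp [Sym2.eq_iff, hbc, hac]
  have nab' : s(a, b) ≠ s(b, c) := by simp [Sym2.eq_iff, hab, hac]
  have nac' : s(a, c) ≠ s(b, c) := by simp [Sym2.eq_iff, hab, hac]
  have mab : s(a, b) ∈ ({s(a, b), s(a, c), s(b, c)} : Finset (Sym2 V)) := by simp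
  have mac : s(a, c) ∈ ({s(a, b), s(a, c), s(b, c)} : Finset (Sym2 V)) := by simp
  have mbc : s(b, c) ∈ ({s(a, b), s(a, c), s(b, c)} : Finset (Sym2 V)) := by simp
  rcases he2 with ⟨eb, ec⟩ | ⟨ea, ec⟩ | ⟨ea, eb⟩ <;>
    rcases hf2 with ⟨fb, fc⟩ | ⟨fa, fc⟩ | ⟨fa, fb⟩
  · by_cases haf : a ∈ f
    · have hae : a ∉ e := fun hae => hef a ⟨hae, haf⟩
      exact ⟨s(a, b), s(b, c), s(a, c), mab, mbc, mac, nab', nab, nac'.symm,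
        indep_of_avoid hae eb, indep_of_avoid fb fc⟩
    · exact ⟨s(b, c), s(a, b), s(a, c), mbc, mab, mac, nab'.symm, nac'.symm, nab,
        indep_of_avoid eb ec, indep_of_avoid haf fb⟩
  · exact ⟨s(b, c), s(a, c), s(a, b), mbc, mac, mab, nac'.symm, nab'.symm, nab.symm,
      indep_of_avoid eb ec, indep_of_avoid fa fc⟩
  · exact ⟨s(b, c), s(a, b), s(a, c), mbc, mab, mac, nab'.symm, nac'.symm, nab,
      indep_of_avoid eb ec, indep_of_avoid fa fb⟩
  · exact ⟨s(a, c), s(b, c), s(a, b), mac, mbc, mab, nac', nab.symm, nab'.symm,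
      indep_of_avoid ea ec, indep_of_avoid fb fc⟩
  · by_cases hbf : b ∈ f
    · have hbe : b ∉ e := fun hbe => hef b ⟨hbe, hbf⟩
      exact ⟨s(a, b), s(a, c), s(b, c), mab, mac, mbc, nab, nab', nac',
        indep_of_avoid ea hbe, indep_of_avoid fa fc⟩
    · exact ⟨s(a, c), s(a, b), s(b, c), mac, mab, mbc, nab.symm, nac', nab',
        indep_of_avoid ea ec, indep_of_avoid fa hbf⟩
  · exact ⟨s(a, c), s(a, b), s(b, c), mac, mab, mbc, nab.symm, nac', nab',
      indep_of_avoid ea ec, indep_of_avoid fa fb⟩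
  · exact ⟨s(a, b), s(b, c), s(a, c), mab, mbc, mac, nab', nab, nac'.symm,
      indep_of_avoid ea eb, indep_of_avoid fb fc⟩
  · exact ⟨s(a, b), s(a, c), s(b, c), mab, mac, mbc, nab, nab', nac',
      indep_of_avoid ea eb, indep_of_avoid fa fc⟩
  · by_cases hcf : c ∈ f
    · have hce : c ∉ e := fun hce => hef c ⟨hce, hcf⟩
      exact ⟨s(a, c), s(a, b), s(b, c), mac, mab, mbc, nab.symm, nac', nab',
        indep_of_avoid ea hce, indep_of_avoid fa fb⟩
    · exact ⟨s(a, b), s(a, c), s(b, c), mab, mac, mbc, nab, nab', nac',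
        indep_of_avoid ea eb, indep_of_avoid fa hcf⟩


lemma mem_T_edgeSet (G : SimpleGraph V) [DecidableRel G.Adj] {t : Sym2 V}
    {S : Finset (Sym2 V)} (hS : S ⊆ G.edgeFinset) (ht : t ∈ S) : t ∈ G.edgeSet :=
  mem_edgeFinset.1 (hS ht)

lemma sitI (G : SimpleGraph V) [DecidableRel G.Adj] {a b c : V} {e f : Sym2 V}
    (hab : a ≠ b) (hac : a ≠ c) (hbc : b ≠ c)
    (he : e ∈ G.edgeSet) (hf : f ∈ G.edgeSet) (hef : Indep e f) (hefne : e ≠ f)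
    (heab : e ≠ s(a, b)) (heac : e ≠ s(a, c)) (hebc : e ≠ s(b, c))
    (hfab : f ≠ s(a, b)) (hfac : f ≠ s(a, c)) (hfbc : f ≠ s(b, c))
    (hE : G.edgeFinset = {s(a, b), s(a, c), s(b, c), e, f}) :
    ∃ P : Finset (Finset (Sym2 V)), Good G P ∧
      P.card = min (#G.edgeFinset / 2) (#G.edgeFinset - G.maxDegree) := by
  have nab : s(a, b) ≠ s(a, c) := by simp [Sym2.eq_iff, hbc, hac]
  have nab' : s(a, b) ≠ s(b, c) := by simp [Sym2.eq_iff, hab, hac]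
  have nac' : s(a, c) ≠ s(b, c) := by simp [Sym2.eq_iff, hab, hac]
  have hTsub : ({s(a, b), s(a, c), s(b, c)} : Finset (Sym2 V)) ⊆ G.edgeFinset := by
    rw [hE]; intro t ht; simp only [mem_insert, mem_singleton] at ht ⊢; tauto
  have hTE : ∀ t ∈ ({s(a, b), s(a, c), s(b, c)} : Finset (Sym2 V)), t ∈ G.edgeSet :=
    fun t ht => mem_T_edgeSet G hTsub ht
  have heT : ∀ t ∈ ({s(a, b), s(a, c), s(b, c)} : Finset (Sym2 V)), e ≠ t := by
    intro t ht; simp only [mem_insert, mem_singleton] at ht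
    rcases ht with rfl | rfl | rfl <;> assumption
  have hfT : ∀ t ∈ ({s(a, b), s(a, c), s(b, c)} : Finset (Sym2 V)), f ≠ t := by
    intro t ht; simp only [mem_insert, mem_singleton] at ht
    rcases ht with rfl | rfl | rfl <;> assumption
  have hcard : #G.edgeFinset = 5 := by
    rw [hE]
    rw [card_insert_of_notMem (by simp [nab, nab', heab.symm, hfab.symm]),
      card_insert_of_notMem (by simp [nac', heac.symm, hfac.symm]),
      card_insert_of_notMem (by simp [hebc.symm, hfbc.symm]),
      card_insert_of_notMem (by simp [hefne]), card_singleton]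
  have hmax : G.maxDegree ≤ 3 := by
    apply maxDegree_le_of_forall_degree_le
    intro z
    rw [← G.card_incidenceFinset_eq_degree z]
    obtain ⟨g1, hg1ef, hg1⟩ : ∃ g1 ∈ ({e, f} : Finset (Sym2 V)), g1 ∉ G.incidenceFinset z := by
      by_cases hz : z ∈ e
      · exact ⟨f, by simp, fun hm => hef z ⟨hz, ((mem_incF G).1 hm).2⟩⟩
      · exact ⟨e, by simp, fun hm => hz ((mem_incF G).1 hm).2⟩
    obtain ⟨t, htT, hzt⟩ : ∃ t ∈ ({s(a, b), s(a, c), s(b, c)} : Finset (Sym2 V)), z ∉ t := by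
      by_cases hza : z = a
      · exact ⟨s(b, c), by simp, by subst hza; simp [Sym2.mem_iff, hab, hac]⟩
      · by_cases hzb : z = b
        · exact ⟨s(a, c), by simp, by subst hzb; simp [Sym2.mem_iff, Ne.symm hab, hbc]⟩
        · exact ⟨s(a, b), by simp, by simp [Sym2.mem_iff, hza, hzb]⟩
    have hg1t : g1 ≠ t := by
      simp only [mem_insert, mem_singleton] at hg1ef
      rcases hg1ef with rfl | rfl
      exacts [heT t htT, hfT t htT]
    have hkey := card_le_sub (S := G.edgeFinset) (m := {g1, t})
      (incF_subset G z) ?_ ?_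
    · have hm2 : #({g1, t} : Finset (Sym2 V)) = 2 := by
        rw [card_insert_of_notMem (by simp [hg1t]), card_singleton]
      omega
    · intro x hx
      simp only [mem_insert, mem_singleton] at hx
      rcases hx with rfl | rfl
      · exact hg1
      · exact fun hm => hzt ((mem_incF G).1 hm).2
    · intro x hx
      simp only [mem_insert, mem_singleton] at hx
      rcases hx with rfl | rfl
      · simp only [mem_insert, mem_singleton] at hg1ef
        rcases hg1ef with rfl | rfl
        exacts [mem_edgeFinset.2 he, mem_edgeFinset.2 hf]
      · exact hTsub htT
  obtain ⟨t1, t2, t3, ht1, ht2, ht3, h12, h13, h23, hi1, hi2⟩ :=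
    matchTwo hab hac hbc hef
      (avoid_two hab hac hbc heab heac hebc) (avoid_two hab hac hbc hfab hfac hfbc)
  obtain ⟨P, hP, hPcard⟩ := good_mk2 G he (hTE t1 ht1) hf (hTE t2 ht2) hi1 hi2
    hefne (heT t2 ht2) (Ne.symm (hfT t1 ht1)) h12
  refine ⟨P, hP, ?_⟩
  rw [hPcard, hcard, Nat.min_def]
  split_ifs <;> omega

lemma sitII (G : SimpleGraph V) [DecidableRel G.Adj] {a b c : V} {e f g : Sym2 V}
    (hab : a ≠ b) (hac : a ≠ c) (hbc : b ≠ c)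
    (he : e ∈ G.edgeSet) (hf : f ∈ G.edgeSet) (hg : g ∈ G.edgeSet)
    (hef : Indep e f) (hefne : e ≠ f) (hge : g ≠ e) (hgf : g ≠ f)
    (hga : a ∉ g) (hgb : b ∉ g) (hgc : c ∉ g)
    (heab : e ≠ s(a, b)) (heac : e ≠ s(a, c)) (hebc : e ≠ s(b, c))
    (hfab : f ≠ s(a, b)) (hfac : f ≠ s(a, c)) (hfbc : f ≠ s(b, c))
    (hE : G.edgeFinset = {s(a, b), s(a, c), s(b, c), g, e, f}) :
    ∃ P : Finset (Finset (Sym2 V)), Good G P ∧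
      P.card = min (#G.edgeFinset / 2) (#G.edgeFinset - G.maxDegree) := by
  have nab : s(a, b) ≠ s(a, c) := by simp [Sym2.eq_iff, hbc, hac]
  have nab' : s(a, b) ≠ s(b, c) := by simp [Sym2.eq_iff, hab, hac]
  have nac' : s(a, c) ≠ s(b, c) := by simp [Sym2.eq_iff, hab, hac]
  have hgab : g ≠ s(a, b) := by rintro rfl; exact hga (by simp)
  have hgac : g ≠ s(a, c) := by rintro rfl; exact hga (by simp)
  have hgbc : g ≠ s(b, c) := by rintro rfl; exact hgb (by simp)
  have hTsub : ({s(a, b), s(a, c), s(b, c)} : Finset (Sym2 V)) ⊆ G.edgeFinset := by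
    rw [hE]; intro t ht; simp only [mem_insert, mem_singleton] at ht ⊢; tauto
  have hTE : ∀ t ∈ ({s(a, b), s(a, c), s(b, c)} : Finset (Sym2 V)), t ∈ G.edgeSet :=
    fun t ht => mem_T_edgeSet G hTsub ht
  have heT : ∀ t ∈ ({s(a, b), s(a, c), s(b, c)} : Finset (Sym2 V)), e ≠ t := by
    intro t ht; simp only [mem_insert, mem_singleton] at ht
    rcases ht with rfl | rfl | rfl <;> assumption
  have hfT : ∀ t ∈ ({s(a, b), s(a, c), s(b, c)} : Finset (Sym2 V)), f ≠ t := by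
    intro t ht; simp only [mem_insert, mem_singleton] at ht
    rcases ht with rfl | rfl | rfl <;> assumption
  have hgT : ∀ t ∈ ({s(a, b), s(a, c), s(b, c)} : Finset (Sym2 V)), g ≠ t := by
    intro t ht; simp only [mem_insert, mem_singleton] at ht
    rcases ht with rfl | rfl | rfl <;> assumption
  have hgTind : ∀ t ∈ ({s(a, b), s(a, c), s(b, c)} : Finset (Sym2 V)), Indep g t := by
    intro t ht; simp only [mem_insert, mem_singleton] at ht
    rcases ht with rfl | rfl | rfl
    exacts [indep_of_avoid hga hgb, indep_of_avoid hga hgc, indep_of_avoid hgb hgc]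
  have hcard : #G.edgeFinset = 6 := by
    rw [hE]
    rw [card_insert_of_notMem (by simp [nab, nab', hgab.symm, heab.symm, hfab.symm]),
      card_insert_of_notMem (by simp [nac', hgac.symm, heac.symm, hfac.symm]),
      card_insert_of_notMem (by simp [hgbc.symm, hebc.symm, hfbc.symm]),
      card_insert_of_notMem (by simp [hge, hgf]),
      card_insert_of_notMem (by simp [hefne]), card_singleton]
  have hmax : G.maxDegree ≤ 3 := by
    apply maxDegree_le_of_forall_degree_le
    intro z
    rw [← G.card_incidenceFinset_eq_degree z]
    obtain ⟨g1, hg1ef, hg1⟩ : ∃ g1 ∈ ({e, f} : Finset (Sym2 V)), g1 ∉ G.incidenceFinset z := by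
      by_cases hz : z ∈ e
      · exact ⟨f, by simp, fun hm => hef z ⟨hz, ((mem_incF G).1 hm).2⟩⟩
      · exact ⟨e, by simp, fun hm => hz ((mem_incF G).1 hm).2⟩
    have hg1T : ∀ t ∈ ({s(a, b), s(a, c), s(b, c)} : Finset (Sym2 V)), g1 ≠ t := by
      simp only [mem_insert, mem_singleton] at hg1ef
      rcases hg1ef with rfl | rfl
      exacts [heT, hfT]
    have hg1E : g1 ∈ G.edgeFinset := by
      simp only [mem_insert, mem_singleton] at hg1ef
      rcases hg1ef with rfl | rfl
      exacts [mem_edgeFinset.2 he, mem_edgeFinset.2 hf]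
    have hg1g : g1 ≠ g := by
      simp only [mem_insert, mem_singleton] at hg1ef
      rcases hg1ef with rfl | rfl
      exacts [Ne.symm hge, Ne.symm hgf]
    by_cases hzg : z ∈ g
    · have hza : z ≠ a := fun h => hga (h ▸ hzg)
      have hzb : z ≠ b := fun h => hgb (h ▸ hzg)
      have hkey := card_le_sub (S := G.edgeFinset)
        (m := {g1, s(a, b), s(a, c)}) (incF_subset G z) ?_ ?_
      · have hm3 : #({g1, s(a, b), s(a, c)} : Finset (Sym2 V)) = 3 := by
          rw [card_insert_of_notMem (by
              simp [hg1T _ (by simp : s(a,b) ∈ ({s(a, b), s(a, c), s(b, c)} : Finset (Sym2 V))),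
                hg1T _ (by simp : s(a,c) ∈ ({s(a, b), s(a, c), s(b, c)} : Finset (Sym2 V)))]),
            card_insert_of_notMem (by simp [nab]), card_singleton]
        omega
      · intro x hx
        simp only [mem_insert, mem_singleton] at hx
        have hzc : z ≠ c := fun h => hgc (h ▸ hzg)
        rcases hx with rfl | rfl | rfl
        · exact hg1
        · exact fun hm => by
            have := ((mem_incF G).1 hm).2
            rw [Sym2.mem_iff] at this; tauto
        · exact fun hm => by
            have := ((mem_incF G).1 hm).2
            rw [Sym2.mem_iff] at this; tauto
      · intro x hx
        simp only [mem_insert, mem_singleton] at hx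
        rcases hx with rfl | rfl | rfl
        · exact hg1E
        · exact hTsub (by simp)
        · exact hTsub (by simp)
    · obtain ⟨t, htT, hzt⟩ : ∃ t ∈ ({s(a, b), s(a, c), s(b, c)} : Finset (Sym2 V)), z ∉ t := by
        by_cases hza : z = a
        · exact ⟨s(b, c), by simp, by subst hza; simp [Sym2.mem_iff, hab, hac]⟩
        · by_cases hzb : z = b
          · exact ⟨s(a, c), by simp, by subst hzb; simp [Sym2.mem_iff, Ne.symm hab, hbc]⟩
          · exact ⟨s(a, b), by simp, by simp [Sym2.mem_iff, hza, hzb]⟩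
      have hkey := card_le_sub (S := G.edgeFinset) (m := {g1, t, g}) (incF_subset G z) ?_ ?_
      · have hm3 : #({g1, t, g} : Finset (Sym2 V)) = 3 := by
          rw [card_insert_of_notMem (by simp [hg1T t htT, hg1g]),
            card_insert_of_notMem (by simp [Ne.symm (hgT t htT)]), card_singleton]
        omega
      · intro x hx
        simp only [mem_insert, mem_singleton] at hx
        rcases hx with rfl | rfl | rfl
        · exact hg1
        · exact fun hm => hzt ((mem_incF G).1 hm).2
        · exact fun hm => hzg ((mem_incF G).1 hm).2
      · intro x hx
        simp only [mem_insert, mem_singleton] at hx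
        rcases hx with rfl | rfl | rfl
        · exact hg1E
        · exact hTsub htT
        · exact mem_edgeFinset.2 hg
  obtain ⟨t1, t2, t3, ht1, ht2, ht3, h12, h13, h23, hi1, hi2⟩ :=
    matchTwo hab hac hbc hef
      (avoid_two hab hac hbc heab heac hebc) (avoid_two hab hac hbc hfab hfac hfbc)
  obtain ⟨P, hP, hPcard⟩ := good_mk3 G he (hTE t1 ht1) hf (hTE t2 ht2) hg (hTE t3 ht3)
    hi1 hi2 (hgTind t3 ht3)
    hefne (heT t2 ht2) (Ne.symm (hfT t1 ht1)) h12
    (Ne.symm hge) (heT t3 ht3) (Ne.symm (hgT t1 ht1)) h13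
    (Ne.symm hgf) (hfT t3 ht3) (Ne.symm (hgT t2 ht2)) h23
  refine ⟨P, hP, ?_⟩
  rw [hPcard, hcard, Nat.min_def]
  split_ifs <;> omega

def Except' (G : SimpleGraph V) : Prop :=
  (∃ a b c : V, a ≠ b ∧ a ≠ c ∧ b ≠ c ∧
      G.edgeSet = {s(a, b), s(a, c), s(b, c)}) ∨
  (∃ a b c d e : V, a ≠ b ∧ a ≠ c ∧ b ≠ c ∧ d ≠ e ∧
      d ∉ ({a, b, c} : Set V) ∧ e ∉ ({a, b, c} : Set V) ∧
      G.edgeSet = {s(a, b), s(a, c), s(b, c), s(d, e)})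

def maxSet (G : SimpleGraph V) [DecidableRel G.Adj] : Finset V :=
  Finset.univ.filter (fun v => G.degree v = G.maxDegree)

lemma mem_maxSet {G : SimpleGraph V} [DecidableRel G.Adj] {v : V} :
    v ∈ maxSet G ↔ G.degree v = G.maxDegree := by simp [maxSet]

lemma one_le_degree_of_mem {G : SimpleGraph V} [DecidableRel G.Adj] {e : Sym2 V} {z : V}
    (he : e ∈ G.edgeSet) (hz : z ∈ e) : 1 ≤ G.degree z := by
  rw [← G.card_incidenceFinset_eq_degree z]
  exact card_pos.2 ⟨e, (mem_incF G).2 ⟨he, hz⟩⟩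

lemma two_le_degree_of_mem {G : SimpleGraph V} [DecidableRel G.Adj] {e f : Sym2 V} {z : V}
    (he : e ∈ G.edgeSet) (hf : f ∈ G.edgeSet) (hef : e ≠ f) (hz : z ∈ e) (hz' : z ∈ f) :
    2 ≤ G.degree z := by
  rw [← G.card_incidenceFinset_eq_degree z]
  have hsub : ({e, f} : Finset (Sym2 V)) ⊆ G.incidenceFinset z := by
    intro x hx
    simp only [mem_insert, mem_singleton] at hx
    rcases hx with rfl | rfl
    exacts [(mem_incF G).2 ⟨he, hz⟩, (mem_incF G).2 ⟨hf, hz'⟩]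
  have := card_le_card hsub
  rwa [card_insert_of_notMem (by simp [hef]), card_singleton] at this

lemma deg_split (G : SimpleGraph V) [DecidableRel G.Adj] :
    (#(maxSet G)) * G.maxDegree +
      ∑ v ∈ Finset.univ.filter (fun v => ¬ G.degree v = G.maxDegree), G.degree v =
      2 * #G.edgeFinset := by
  rw [← sum_degrees_eq_twice_card_edges,
    ← sum_filter_add_sum_filter_not Finset.univ (fun v => G.degree v = G.maxDegree)]
  congr 1
  rw [sum_congr rfl (fun v hv => (mem_filter.1 hv).2), sum_const, smul_eq_mul]
  rfl

lemma maxdeg_one (G : SimpleGraph V) [DecidableRel G.Adj] (h : G.maxDegree = 1) :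
    2 * #G.edgeFinset = #(maxSet G) := by
  have hs := deg_split G
  have hz : ∑ v ∈ Finset.univ.filter (fun v => ¬ G.degree v = G.maxDegree), G.degree v = 0 := by
    apply sum_eq_zero
    intro v hv
    have h1 := G.degree_le_maxDegree v
    have h2 := (mem_filter.1 hv).2
    omega
  rw [hz, h, mul_one] at hs
  omega

lemma maxSet_card_mul_le (G : SimpleGraph V) [DecidableRel G.Adj] :
    (#(maxSet G)) * G.maxDegree ≤ 2 * #G.edgeFinset := by
  have := deg_split G
  omega

lemma edgeSet_eq_of_edgeFinset (G : SimpleGraph V) [DecidableRel G.Adj]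
    {S : Finset (Sym2 V)} (h : G.edgeFinset = S) : G.edgeSet = (↑S : Set (Sym2 V)) := by
  rw [← coe_edgeFinset, h]

lemma cover3 (G : SimpleGraph V) [DecidableRel G.Adj]
    (hD : #G.edgeFinset ≤ 2 * G.maxDegree) {u v w : V}
    (huv : u ≠ v) (huw : u ≠ w) (hvw : v ≠ w)
    (hu : G.degree u = G.maxDegree) (hv : G.degree v = G.maxDegree)
    (hw : G.degree w = G.maxDegree) (hΔ2 : 2 ≤ G.maxDegree) (hadj : G.Adj u v) :
    (∃ e f : Sym2 V, e ∈ G.edgeSet ∧ f ∈ G.edgeSet ∧ Indep e f ∧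
      u ∈ e ∧ v ∈ e ∧ w ∈ f) ∨ Except' G := by
  by_cases hC : (((G.incidenceFinset w).erase s(w, u)).erase s(w, v)).Nonempty
  · obtain ⟨f, hf⟩ := hC
    rw [mem_erase, mem_erase] at hf
    obtain ⟨hfv, hfu, hfw⟩ := hf
    have hfE : f ∈ G.edgeSet := ((mem_incF G).1 hfw).1
    have hwf : w ∈ f := ((mem_incF G).1 hfw).2
    have hunotf : u ∉ f := fun hun => hfu (by
      rw [two_mem_eq hwf hun (Ne.symm huw)])
    have hvnotf : v ∉ f := fun hvn => hfv (by
      rw [two_mem_eq hwf hvn (Ne.symm hvw)])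
    refine Or.inl ⟨s(u, v), f, (SimpleGraph.mem_edgeSet G).2 hadj, hfE, ?_, by simp, by simp, hwf⟩
    rintro z ⟨hz1, hz2⟩
    rw [Sym2.mem_iff] at hz1
    rcases hz1 with rfl | rfl
    exacts [hunotf hz2, hvnotf hz2]
  · -- w's edges are only to u and v: triangle situation
    have hsub : G.incidenceFinset w ⊆ {s(w, u), s(w, v)} := by
      intro x hx
      simp only [mem_insert, mem_singleton]
      by_contra hcon
      push_neg at hcon
      exact hC ⟨x, by rw [mem_erase, mem_erase]; exact ⟨hcon.2, hcon.1, hx⟩⟩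
    have hwuv : s(w, u) ≠ s(w, v) := by simp [Sym2.eq_iff, huv, Ne.symm hvw]
    have hcard2 : #({s(w, u), s(w, v)} : Finset (Sym2 V)) = 2 := by
      rw [card_insert_of_notMem (by simp [hwuv]), card_singleton]
    have hdegw : G.degree w ≤ 2 := by
      rw [← G.card_incidenceFinset_eq_degree w]
      have := card_le_card hsub
      omega
    have hΔ : G.maxDegree = 2 := by omega
    have hinc : G.incidenceFinset w = {s(w, u), s(w, v)} :=
      eq_of_subset_of_card_le hsub (by rw [hcard2, G.card_incidenceFinset_eq_degree w]; omega)
    have hwu : G.Adj w u := by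
      have : s(w, u) ∈ G.incidenceFinset w := by rw [hinc]; simp
      exact (SimpleGraph.mem_edgeSet G).1 ((mem_incF G).1 this).1
    have hwv : G.Adj w v := by
      have : s(w, v) ∈ G.incidenceFinset w := by rw [hinc]; simp
      exact (SimpleGraph.mem_edgeSet G).1 ((mem_incF G).1 this).1
    have nuv_uw : s(u, v) ≠ s(u, w) := by simp [Sym2.eq_iff, hvw, huw]
    have nuv_vw : s(u, v) ≠ s(v, w) := by simp [Sym2.eq_iff, huv, huw]
    have nuw_vw : s(u, w) ≠ s(v, w) := by simp [Sym2.eq_iff, huv, huw]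
    have hTsub : ({s(u, v), s(u, w), s(v, w)} : Finset (Sym2 V)) ⊆ G.edgeFinset := by
      intro x hx
      simp only [mem_insert, mem_singleton] at hx
      rcases hx with rfl | rfl | rfl
      exacts [mem_edgeFinset.2 ((SimpleGraph.mem_edgeSet G).2 hadj),
        mem_edgeFinset.2 ((SimpleGraph.mem_edgeSet G).2 hwu.symm),
        mem_edgeFinset.2 ((SimpleGraph.mem_edgeSet G).2 hwv.symm)]
    have hT3 : #({s(u, v), s(u, w), s(v, w)} : Finset (Sym2 V)) = 3 := by
      rw [card_insert_of_notMem (by simp [nuv_uw, nuv_vw]),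
        card_insert_of_notMem (by simp [nuw_vw]), card_singleton]
    have hm3 : 3 ≤ #G.edgeFinset := hT3 ▸ card_le_card hTsub
    have hm4 : #G.edgeFinset ≤ 4 := by omega
    by_cases hm : #G.edgeFinset = 3
    · have hE : ({s(u, v), s(u, w), s(v, w)} : Finset (Sym2 V)) = G.edgeFinset :=
        eq_of_subset_of_card_le hTsub (by omega)
      refine Or.inr (Or.inl ⟨u, v, w, huv, huw, hvw, ?_⟩)
      rw [edgeSet_eq_of_edgeFinset G hE.symm]
      simp
    · have hm' : #G.edgeFinset = 4 := by omega
      have hg : (G.edgeFinset \ ({s(u, v), s(u, w), s(v, w)} : Finset (Sym2 V))).Nonempty := by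
        rw [← card_pos]
        have := le_card_sdiff ({s(u, v), s(u, w), s(v, w)} : Finset (Sym2 V)) G.edgeFinset
        omega
      obtain ⟨g, hgmem⟩ := hg
      rw [mem_sdiff] at hgmem
      obtain ⟨hgE, hgT⟩ := hgmem
      simp only [mem_insert, mem_singleton, not_or] at hgT
      obtain ⟨hg1, hg2, hg3⟩ := hgT
      have hgES : g ∈ G.edgeSet := mem_edgeFinset.1 hgE
      -- u, v, w not in g
      have hnotin : ∀ z z' : V, z ≠ z' → G.Adj z z' → ∀ pz : Sym2 V, pz ∈ G.incidenceFinset z →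
        True := fun _ _ _ _ _ _ => trivial
      have hui : ({s(u, v), s(u, w)} : Finset (Sym2 V)) ⊆ G.incidenceFinset u := by
        intro x hx
        simp only [mem_insert, mem_singleton] at hx
        rcases hx with rfl | rfl
        exacts [(mem_incF G).2 ⟨(SimpleGraph.mem_edgeSet G).2 hadj, by simp⟩,
          (mem_incF G).2 ⟨(SimpleGraph.mem_edgeSet G).2 hwu.symm, by simp⟩]
      have huinc : G.incidenceFinset u = {s(u, v), s(u, w)} := by
        refine (eq_of_subset_of_card_le hui ?_).symm
        rw [card_insert_of_notMem (by simp [nuv_uw]), card_singleton,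
          G.card_incidenceFinset_eq_degree u]
        omega
      have hvi : ({s(u, v), s(v, w)} : Finset (Sym2 V)) ⊆ G.incidenceFinset v := by
        intro x hx
        simp only [mem_insert, mem_singleton] at hx
        rcases hx with rfl | rfl
        exacts [(mem_incF G).2 ⟨(SimpleGraph.mem_edgeSet G).2 hadj, by simp⟩,
          (mem_incF G).2 ⟨(SimpleGraph.mem_edgeSet G).2 hwv.symm, by simp⟩]
      have hvinc : G.incidenceFinset v = {s(u, v), s(v, w)} := by
        refine (eq_of_subset_of_card_le hvi ?_).symm
        rw [card_insert_of_notMem (by simp [nuv_vw]), card_singleton,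
          G.card_incidenceFinset_eq_degree v]
        omega
      have hung : u ∉ g := fun hug => by
        have : g ∈ G.incidenceFinset u := (mem_incF G).2 ⟨hgES, hug⟩
        rw [huinc] at this
        simp only [mem_insert, mem_singleton] at this
        tauto
      have hvng : v ∉ g := fun hvg => by
        have : g ∈ G.incidenceFinset v := (mem_incF G).2 ⟨hgES, hvg⟩
        rw [hvinc] at this
        simp only [mem_insert, mem_singleton] at this
        tauto
      have hwng : w ∉ g := fun hwg => by
        have : g ∈ G.incidenceFinset w := (mem_incF G).2 ⟨hgES, hwg⟩
        rw [hinc] at this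
        simp only [mem_insert, mem_singleton] at this
        rcases this with rfl | rfl
        · exact hg2 Sym2.eq_swap.symm
        · exact hg3 Sym2.eq_swap.symm
      obtain ⟨d, e', hde, hgrep⟩ := exists_rep hgES
      have hdg : d ∈ g := by rw [hgrep]; simp
      have heg : e' ∈ g := by rw [hgrep]; simp
      have hE : ({s(u, v), s(u, w), s(v, w), g} : Finset (Sym2 V)) = G.edgeFinset := by
        apply eq_of_subset_of_card_le
        · intro x hx
          simp only [mem_insert, mem_singleton] at hx
          rcases hx with rfl | rfl | rfl | rfl
          exacts [hTsub (by simp), hTsub (by simp), hTsub (by simp), hgE]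
        · rw [card_insert_of_notMem (by simp [nuv_uw, nuv_vw, Ne.symm hg1]),
            card_insert_of_notMem (by simp [nuw_vw, Ne.symm hg2]),
            card_insert_of_notMem (by simp [Ne.symm hg3]), card_singleton]
          omega
      refine Or.inr (Or.inr ⟨u, v, w, d, e', huv, huw, hvw, hde, ?_, ?_, ?_⟩)
      · simp only [Set.mem_insert_iff, Set.mem_singleton_iff]
        rintro (rfl | rfl | rfl)
        exacts [hung hdg, hvng hdg, hwng hdg]
      · simp only [Set.mem_insert_iff, Set.mem_singleton_iff]
        rintro (rfl | rfl | rfl)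
        exacts [hung heg, hvng heg, hwng heg]
      · rw [edgeSet_eq_of_edgeFinset G hE.symm, hgrep]
        simp

lemma coverPair (G : SimpleGraph V) [DecidableRel G.Adj]
    (hD : #G.edgeFinset ≤ 2 * G.maxDegree)
    (hm : 2 ≤ #G.edgeFinset) (hΔm : G.maxDegree + 1 ≤ #G.edgeFinset) :
    (∃ e f : Sym2 V, e ∈ G.edgeSet ∧ f ∈ G.edgeSet ∧ Indep e f ∧
      ∀ z : V, G.degree z = G.maxDegree → (z ∈ e ∨ z ∈ f)) ∨ Except' G ∨
    (∃ P : Finset (Finset (Sym2 V)), Good G P ∧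
      P.card = min (#G.edgeFinset / 2) (#G.edgeFinset - G.maxDegree)) := by
  -- basic facts
  obtain ⟨e0, he0⟩ : G.edgeFinset.Nonempty := card_pos.1 (by omega)
  obtain ⟨x0, y0, hx0y0, he0rep⟩ := exists_rep (mem_edgeFinset.1 he0)
  have hVne : Nonempty V := ⟨x0⟩
  have hΔ1 : 1 ≤ G.maxDegree := by
    have h1 : 1 ≤ G.degree x0 :=
      one_le_degree_of_mem (mem_edgeFinset.1 he0) (by rw [he0rep]; simp)
    have := G.degree_le_maxDegree x0
    omega
  obtain ⟨vm, hvm⟩ := G.exists_maximal_degree_vertex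
  have hKne : vm ∈ maxSet G := mem_maxSet.2 hvm.symm
  have hK4 : #(maxSet G) ≤ 4 := by
    have h1 := maxSet_card_mul_le G
    have h2 : #(maxSet G) * G.maxDegree ≤ 4 * G.maxDegree := by omega
    exact Nat.le_of_mul_le_mul_right h2 (by omega)
  have hK1 : 1 ≤ #(maxSet G) := card_pos.2 ⟨vm, hKne⟩
  have hKcases : #(maxSet G) = 1 ∨ #(maxSet G) = 2 ∨ #(maxSet G) = 3 ∨ #(maxSet G) = 4 := by
    omega
  rcases hKcases with hKc | hKc | hKc | hKc
  · -- |K| = 1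
    obtain ⟨v, hKv⟩ := card_eq_one.1 hKc
    have hvdeg : G.degree v = G.maxDegree := mem_maxSet.1 (hKv ▸ mem_singleton_self v)
    have hKmem : ∀ z, G.degree z = G.maxDegree → z = v := by
      intro z hz
      have : z ∈ maxSet G := mem_maxSet.2 hz
      rw [hKv, mem_singleton] at this
      exact this
    have hΔ2 : 2 ≤ G.maxDegree := by
      rcases Nat.lt_or_ge G.maxDegree 2 with h | h
      · exfalso
        have h1 : G.maxDegree = 1 := by omega
        have := maxdeg_one G h1
        rw [hKc] at this
        omega
      · exact h
    -- pick f not at v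
    have hfex : (G.edgeFinset \ G.incidenceFinset v).Nonempty := by
      rw [← card_pos]
      have h1 := le_card_sdiff (G.incidenceFinset v) G.edgeFinset
      have h2 : #(G.incidenceFinset v) = G.maxDegree := by
        rw [G.card_incidenceFinset_eq_degree v, hvdeg]
      omega
    obtain ⟨f, hfmem⟩ := hfex
    rw [mem_sdiff] at hfmem
    obtain ⟨hfE, hfni⟩ := hfmem
    have hfES : f ∈ G.edgeSet := mem_edgeFinset.1 hfE
    have hvnf : v ∉ f := fun hv => hfni ((mem_incF G).2 ⟨hfES, hv⟩)
    obtain ⟨x, y, hxy, hfrep⟩ := exists_rep hfES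
    have hxf : x ∈ f := by rw [hfrep]; simp
    have hyf : y ∈ f := by rw [hfrep]; simp
    have hxv : x ≠ v := fun h => hvnf (h ▸ hxf)
    have hyv : y ≠ v := fun h => hvnf (h ▸ hyf)
    by_cases hΔ3 : 3 ≤ G.maxDegree
    · have hCne : (((G.incidenceFinset v).erase s(v, x)).erase s(v, y)).Nonempty := by
        rw [← card_pos]
        have h1 := pred_card_le_card_erase
          (s := (G.incidenceFinset v).erase s(v, x)) (a := s(v, y))
        have h2 := pred_card_le_card_erase (s := G.incidenceFinset v) (a := s(v, x))
        have h3 : #(G.incidenceFinset v) = G.maxDegree := by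
          rw [G.card_incidenceFinset_eq_degree v, hvdeg]
        omega
      obtain ⟨e, he⟩ := hCne
      rw [mem_erase, mem_erase] at he
      obtain ⟨hey, hex, heiv⟩ := he
      have heES : e ∈ G.edgeSet := ((mem_incF G).1 heiv).1
      have hve : v ∈ e := ((mem_incF G).1 heiv).2
      have hxne : x ∉ e := fun hxe => hex (two_mem_eq hve hxe (Ne.symm hxv))
      have hyne : y ∉ e := fun hye => hey (two_mem_eq hve hye (Ne.symm hyv))
      refine Or.inl ⟨e, f, heES, hfES, ?_, fun z hz => Or.inl ((hKmem z hz) ▸ hve)⟩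
      rintro z ⟨hz1, hz2⟩
      rw [hfrep, Sym2.mem_iff] at hz2
      rcases hz2 with rfl | rfl
      exacts [hxne hz1, hyne hz1]
    · -- maxDegree = 2
      have hΔ : G.maxDegree = 2 := by omega
      obtain ⟨e, heiv⟩ : (G.incidenceFinset v).Nonempty := by
        rw [← card_pos, G.card_incidenceFinset_eq_degree v]
        omega
      have heES : e ∈ G.edgeSet := ((mem_incF G).1 heiv).1
      have hve : v ∈ e := ((mem_incF G).1 heiv).2
      have hxne : x ∉ e := by
        intro hxe
        have hevx : e = s(v, x) := two_mem_eq hve hxe (Ne.symm hxv)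
        have : 2 ≤ G.degree x := two_le_degree_of_mem hfES heES
          (fun h => hvnf (h ▸ hve)) hxf (hevx ▸ (by simp : x ∈ s(v, x)))
        have hxmax : G.degree x = G.maxDegree := by
          have := G.degree_le_maxDegree x
          omega
        exact hxv (hKmem x hxmax)
      have hyne : y ∉ e := by
        intro hye
        have hevy : e = s(v, y) := two_mem_eq hve hye (Ne.symm hyv)
        have : 2 ≤ G.degree y := two_le_degree_of_mem hfES heES
          (fun h => hvnf (h ▸ hve)) hyf (hevy ▸ (by simp : y ∈ s(v, y)))
        have hymax : G.degree y = G.maxDegree := by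
          have := G.degree_le_maxDegree y
          omega
        exact hyv (hKmem y hymax)
      refine Or.inl ⟨e, f, heES, hfES, ?_, fun z hz => Or.inl ((hKmem z hz) ▸ hve)⟩
      rintro z ⟨hz1, hz2⟩
      rw [hfrep, Sym2.mem_iff] at hz2
      rcases hz2 with rfl | rfl
      exacts [hxne hz1, hyne hz1]
  · -- |K| = 2
    obtain ⟨u, v, huv, hKv⟩ := card_eq_two.1 hKc
    have hudeg : G.degree u = G.maxDegree := mem_maxSet.1 (by rw [hKv]; simp)
    have hvdeg : G.degree v = G.maxDegree := mem_maxSet.1 (by rw [hKv]; simp)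
    have hKmem : ∀ z, G.degree z = G.maxDegree → z = u ∨ z = v := by
      intro z hz
      have : z ∈ maxSet G := mem_maxSet.2 hz
      rw [hKv] at this
      simpa using this
    have hΔ2 : 2 ≤ G.maxDegree := by
      rcases Nat.lt_or_ge G.maxDegree 2 with h | h
      · exfalso
        have h1 : G.maxDegree = 1 := by omega
        have := maxdeg_one G h1
        rw [hKc] at this
        omega
      · exact h
    have hXne : ((G.neighborFinset u).erase v).Nonempty := by
      rw [← card_pos]
      have h1 := pred_card_le_card_erase (s := G.neighborFinset u) (a := v)
      have h2 : #(G.neighborFinset u) = G.maxDegree := by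
        rw [G.card_neighborFinset_eq_degree u, hudeg]
      omega
    obtain ⟨x, hx⟩ := hXne
    rw [mem_erase, mem_neighborFinset] at hx
    obtain ⟨hxv, hux⟩ := hx
    have hxu : x ≠ u := hux.ne'
    have hYne : (((G.neighborFinset v).erase u).erase x).Nonempty := by
      by_cases hΔ3 : 3 ≤ G.maxDegree
      · rw [← card_pos]
        have h1 := pred_card_le_card_erase
          (s := (G.neighborFinset v).erase u) (a := x)
        have h2 := pred_card_le_card_erase (s := G.neighborFinset v) (a := u)
        have h3 : #(G.neighborFinset v) = G.maxDegree := by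
          rw [G.card_neighborFinset_eq_degree v, hvdeg]
        omega
      · have hΔ : G.maxDegree = 2 := by omega
        have hxNv : x ∉ G.neighborFinset v := by
          intro hxNv
          rw [mem_neighborFinset] at hxNv
          have h2 : 2 ≤ G.degree x := by
            rw [← G.card_neighborFinset_eq_degree x]
            have hsub : ({u, v} : Finset V) ⊆ G.neighborFinset x := by
              intro t ht
              simp only [mem_insert, mem_singleton] at ht
              rcases ht with rfl | rfl
              exacts [(mem_neighborFinset _ _ _).2 hux.symm,
                (mem_neighborFinset _ _ _).2 hxNv.symm]
            have := card_le_card hsub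
            rwa [card_insert_of_notMem (by simp [huv]), card_singleton] at this
          have hxmax : G.degree x = G.maxDegree := by
            have := G.degree_le_maxDegree x
            omega
          rcases hKmem x hxmax with rfl | rfl
          exacts [hxu rfl, hxv rfl]
        rw [erase_eq_of_notMem (fun hc => hxNv (mem_of_mem_erase hc))]
        rw [← card_pos]
        have h1 := pred_card_le_card_erase (s := G.neighborFinset v) (a := u)
        have h2 : #(G.neighborFinset v) = G.maxDegree := by
          rw [G.card_neighborFinset_eq_degree v, hvdeg]
        omega
    obtain ⟨y, hy⟩ := hYne
    rw [mem_erase, mem_erase, mem_neighborFinset] at hy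
    obtain ⟨hyx, hyu, hvy⟩ := hy
    have hyv : y ≠ v := hvy.ne'
    refine Or.inl ⟨s(u, x), s(v, y), (SimpleGraph.mem_edgeSet G).2 hux,
      (SimpleGraph.mem_edgeSet G).2 hvy, ?_, ?_⟩
    · rintro z ⟨hz1, hz2⟩
      rw [Sym2.mem_iff] at hz1 hz2
      rcases hz1 with rfl | rfl <;> rcases hz2 with rfl | rfl
      exacts [huv rfl, hyu rfl, hxv rfl, hyx rfl]
    · intro z hz
      rcases hKmem z hz with rfl | rfl
      · exact Or.inl (by simp)
      · exact Or.inr (by simp)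
  · -- |K| = 3
    obtain ⟨u, v, w, huv, huw, hvw, hKv⟩ := card_eq_three.1 hKc
    have hudeg : G.degree u = G.maxDegree := mem_maxSet.1 (by rw [hKv]; simp)
    have hvdeg : G.degree v = G.maxDegree := mem_maxSet.1 (by rw [hKv]; simp)
    have hwdeg : G.degree w = G.maxDegree := mem_maxSet.1 (by rw [hKv]; simp)
    have hKmem : ∀ z, G.degree z = G.maxDegree → z = u ∨ z = v ∨ z = w := by
      intro z hz
      have : z ∈ maxSet G := mem_maxSet.2 hz
      rw [hKv] at this
      simpa using this
    have hΔ2 : 2 ≤ G.maxDegree := by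
      rcases Nat.lt_or_ge G.maxDegree 2 with h | h
      · exfalso
        have h1 : G.maxDegree = 1 := by omega
        have := maxdeg_one G h1
        rw [hKc] at this
        omega
      · exact h
    -- some edge among u, v, w
    have hadj : G.Adj u v ∨ G.Adj u w ∨ G.Adj v w := by
      by_contra hno
      push_neg at hno
      obtain ⟨h1, h2, h3⟩ := hno
      have d12 : Disjoint (G.incidenceFinset u) (G.incidenceFinset v) := by
        rw [Finset.disjoint_left]
        intro e heu hev
        have h := two_mem_eq ((mem_incF G).1 heu).2 ((mem_incF G).1 hev).2 huv
        exact h1 ((SimpleGraph.mem_edgeSet G).1 (h ▸ ((mem_incF G).1 heu).1))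
      have d13 : Disjoint (G.incidenceFinset u) (G.incidenceFinset w) := by
        rw [Finset.disjoint_left]
        intro e heu hew
        have h := two_mem_eq ((mem_incF G).1 heu).2 ((mem_incF G).1 hew).2 huw
        exact h2 ((SimpleGraph.mem_edgeSet G).1 (h ▸ ((mem_incF G).1 heu).1))
      have d23 : Disjoint (G.incidenceFinset v) (G.incidenceFinset w) := by
        rw [Finset.disjoint_left]
        intro e hev hew
        have h := two_mem_eq ((mem_incF G).1 hev).2 ((mem_incF G).1 hew).2 hvw
        exact h3 ((SimpleGraph.mem_edgeSet G).1 (h ▸ ((mem_incF G).1 hev).1))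
      have hsub : (G.incidenceFinset u ∪ G.incidenceFinset v) ∪ G.incidenceFinset w ⊆
          G.edgeFinset := by
        intro e he
        simp only [mem_union] at he
        rcases he with (he | he) | he <;> exact incF_subset G _ he
      have hcard := card_le_card hsub
      rw [card_union_of_disjoint (disjoint_union_left.2 ⟨d13, d23⟩),
        card_union_of_disjoint d12] at hcard
      rw [G.card_incidenceFinset_eq_degree u, G.card_incidenceFinset_eq_degree v,
        G.card_incidenceFinset_eq_degree w, hudeg, hvdeg, hwdeg] at hcard
      omega
    have hfin : ∀ (p q r : V), p ≠ q → p ≠ r → q ≠ r →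
        G.degree p = G.maxDegree → G.degree q = G.maxDegree → G.degree r = G.maxDegree →
        G.Adj p q →
        (∀ z, G.degree z = G.maxDegree → z = p ∨ z = q ∨ z = r) →
        (∃ e f : Sym2 V, e ∈ G.edgeSet ∧ f ∈ G.edgeSet ∧ Indep e f ∧
          ∀ z : V, G.degree z = G.maxDegree → (z ∈ e ∨ z ∈ f)) ∨ Except' G := by
      intro p q r hpq hpr hqr hp hq hr hadj' hmem
      rcases cover3 G hD hpq hpr hqr hp hq hr hΔ2 hadj' with ⟨e, f, heE, hfE, hind, hpe, hqe, hrf⟩ | hexc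
      · refine Or.inl ⟨e, f, heE, hfE, hind, ?_⟩
        intro z hz
        rcases hmem z hz with rfl | rfl | rfl
        exacts [Or.inl hpe, Or.inl hqe, Or.inr hrf]
      · exact Or.inr hexc
    rcases hadj with h | h | h
    · rcases hfin u v w huv huw hvw hudeg hvdeg hwdeg h hKmem with hc | hc
      exacts [Or.inl hc, Or.inr (Or.inl hc)]
    · rcases hfin u w v huw huv (Ne.symm hvw) hudeg hwdeg hvdeg h
        (fun z hz => by rcases hKmem z hz with h' | h' | h' <;> tauto) with hc | hc
      exacts [Or.inl hc, Or.inr (Or.inl hc)]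
    · rcases hfin v w u hvw (Ne.symm huv) (Ne.symm huw) hvdeg hwdeg hudeg h
        (fun z hz => by rcases hKmem z hz with h' | h' | h' <;> tauto) with hc | hc
      exacts [Or.inl hc, Or.inr (Or.inl hc)]
  · -- |K| = 4 : direct constructions
    right; right
    have hsplit := deg_split G
    have hKmul : #(maxSet G) * G.maxDegree = 4 * G.maxDegree := by rw [hKc]
    have hrest : ∑ v ∈ Finset.univ.filter (fun v => ¬ G.degree v = G.maxDegree),
        G.degree v = 0 := by
      have h1 : 4 * G.maxDegree ≤ 2 * #G.edgeFinset := by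
        rw [← hKmul]; omega
      omega
    have hm2 : 2 * #G.edgeFinset = 4 * G.maxDegree := by omega
    have hzero : ∀ z : V, z ∉ maxSet G → G.degree z = 0 := by
      intro z hz
      have hz' : z ∈ Finset.univ.filter (fun v => ¬ G.degree v = G.maxDegree) := by
        simp only [mem_filter, mem_univ, true_and]
        exact fun h => hz (mem_maxSet.2 h)
      exact (sum_eq_zero_iff).1 hrest z hz'
    have hinK : ∀ {z : V} {e : Sym2 V}, e ∈ G.edgeSet → z ∈ e → z ∈ maxSet G := by
      intro z e he hz
      by_contra hzn
      have := one_le_degree_of_mem he hz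
      rw [hzero z hzn] at this
      omega
    have hNsub : ∀ z : V, G.neighborFinset z ⊆ (maxSet G).erase z := by
      intro z t ht
      rw [mem_neighborFinset] at ht
      rw [mem_erase]
      exact ⟨ht.ne', hinK ((SimpleGraph.mem_edgeSet G).2 ht) (by simp)⟩
    have hΔ3 : G.maxDegree ≤ 3 := by
      have h1 := card_le_card (hNsub vm)
      rw [G.card_neighborFinset_eq_degree vm, hvm.symm] at h1
      have h2 : #((maxSet G).erase vm) = #(maxSet G) - 1 := card_erase_of_mem hKne
      omega
    rcases (by omega : G.maxDegree = 1 ∨ G.maxDegree = 2 ∨ G.maxDegree = 3) with hΔ | hΔ | hΔ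
    · -- 2K2
      have hm' : #G.edgeFinset = 2 := by omega
      obtain ⟨e, f, hef, hEef⟩ := card_eq_two.1 hm'
      have heE : e ∈ G.edgeSet := mem_edgeFinset.1 (by rw [hEef]; simp)
      have hfE : f ∈ G.edgeSet := mem_edgeFinset.1 (by rw [hEef]; simp)
      have hind : Indep e f := by
        rintro z ⟨hz1, hz2⟩
        have h2 := two_le_degree_of_mem heE hfE hef hz1 hz2
        have := G.degree_le_maxDegree z
        omega
      obtain ⟨P, hP, hPc⟩ := good_mk1 G heE hfE hind
      exact ⟨P, hP, by rw [hPc, hm', hΔ]; decide⟩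
    · -- C4
      have hm' : #G.edgeFinset = 4 := by omega
      have humax : G.degree vm = G.maxDegree := hvm.symm
      have hN2 : #(G.neighborFinset vm) = 2 := by
        rw [G.card_neighborFinset_eq_degree vm, humax, hΔ]
      obtain ⟨x, y, hxy, hNxy⟩ := card_eq_two.1 hN2
      have hux : G.Adj vm x := (mem_neighborFinset _ _ _).1 (by rw [hNxy]; simp)
      have huy : G.Adj vm y := (mem_neighborFinset _ _ _).1 (by rw [hNxy]; simp)
      have hxu : x ≠ vm := hux.ne'
      have hyu : y ≠ vm := huy.ne'
      have hdne : ((maxSet G) \ {vm, x, y}).Nonempty := by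
        rw [← card_pos]
        have h1 := le_card_sdiff ({vm, x, y} : Finset V) (maxSet G)
        have h2 : #({vm, x, y} : Finset V) ≤ 3 := by
          apply le_trans (card_insert_le _ _)
          have := card_insert_le x ({y} : Finset V)
          simp at this ⊢
          omega
        omega
      obtain ⟨d, hd⟩ := hdne
      rw [mem_sdiff] at hd
      obtain ⟨hdK, hdn⟩ := hd
      simp only [mem_insert, mem_singleton, not_or] at hdn
      obtain ⟨hdu, hdx, hdy⟩ := hdn
      have hdnadj : ¬ G.Adj vm d := by
        intro hc
        have : d ∈ G.neighborFinset vm := (mem_neighborFinset _ _ _).2 hc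
        rw [hNxy] at this
        simp only [mem_insert, mem_singleton] at this
        tauto
      have hNdsub : G.neighborFinset d ⊆ ({x, y} : Finset V) := by
        intro t ht
        have h1 := hNsub d ht
        rw [mem_erase] at h1
        rw [mem_neighborFinset] at ht
        have htu : t ≠ vm := by
          rintro rfl
          exact hdnadj ht.symm
        -- t ∈ maxSet G, t ≠ d, t ≠ vm ; maxSet = {vm, x, y, d}
        have hKfull : maxSet G = {vm, x, y, d} := by
          apply (eq_of_subset_of_card_le _ _).symm
          · intro s hs
            simp only [mem_insert, mem_singleton] at hs
            rcases hs with rfl | rfl | rfl | rfl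
            · exact mem_maxSet.2 humax
            · exact hinK ((SimpleGraph.mem_edgeSet G).2 hux) (by simp)
            · exact hinK ((SimpleGraph.mem_edgeSet G).2 huy) (by simp)
            · exact hdK
          · rw [card_insert_of_notMem (by simp [Ne.symm hxu, Ne.symm hyu, Ne.symm hdu]),
              card_insert_of_notMem (by simp [hxy, Ne.symm hdx]),
              card_insert_of_notMem (by simp [Ne.symm hdy]), card_singleton, hKc]
        rw [hKfull] at h1
        have h2 := h1.2
        simp only [mem_insert, mem_singleton] at h2
        rcases h2 with rfl | rfl | rfl | rfl
        · exact absurd rfl htu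
        · simp
        · simp
        · exact absurd rfl h1.1
      have hNdeq : G.neighborFinset d = {x, y} := by
        apply eq_of_subset_of_card_le hNdsub
        rw [G.card_neighborFinset_eq_degree d, mem_maxSet.1 hdK, hΔ,
          card_insert_of_notMem (by simp [hxy]), card_singleton]
      have hdx' : G.Adj d x := (mem_neighborFinset _ _ _).1 (by rw [hNdeq]; simp)
      have hdy' : G.Adj d y := (mem_neighborFinset _ _ _).1 (by rw [hNdeq]; simp)
      have hud : vm ≠ d := fun h => hdu h.symm
      have hxd : x ≠ d := fun h => hdx h.symm
      have hyd : y ≠ d := fun h => hdy h.symm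
      obtain ⟨P, hP, hPc⟩ := good_mk2 G ((SimpleGraph.mem_edgeSet G).2 hux)
        ((SimpleGraph.mem_edgeSet G).2 hdy') ((SimpleGraph.mem_edgeSet G).2 huy)
        ((SimpleGraph.mem_edgeSet G).2 hdx')
        (indep_of_avoid (by simp [hdu, hdx]) (by simp [hyu, Ne.symm hxy]))
        (indep_of_avoid (by simp [hdu, hdy]) (by simp [hxu, hxy]))
        (by simp [Sym2.eq_iff, hxy, Ne.symm hyu])
        (by simp [Sym2.eq_iff, hud, Ne.symm hxu, hxd])
        (by simp [Sym2.eq_iff, hdu, hdy, hyu])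
        (by simp [Sym2.eq_iff, Ne.symm hxy, hdx, hyd])
      exact ⟨P, hP, by rw [hPc, hm', hΔ]; decide⟩
    · -- K4
      have hm' : #G.edgeFinset = 6 := by omega
      have humax : G.degree vm = G.maxDegree := hvm.symm
      have hKe3 : #((maxSet G).erase vm) = 3 := by
        rw [card_erase_of_mem hKne, hKc]
      obtain ⟨x, y, z, hxy, hxz, hyz, hKe⟩ := card_eq_three.1 hKe3
      have hxu : x ≠ vm := by
        have : x ∈ (maxSet G).erase vm := by rw [hKe]; simp
        exact (mem_erase.1 this).1
      have hyu : y ≠ vm := by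
        have : y ∈ (maxSet G).erase vm := by rw [hKe]; simp
        exact (mem_erase.1 this).1
      have hzu : z ≠ vm := by
        have : z ∈ (maxSet G).erase vm := by rw [hKe]; simp
        exact (mem_erase.1 this).1
      have hNu : G.neighborFinset vm = {x, y, z} := by
        rw [← hKe]
        apply eq_of_subset_of_card_le (hNsub vm)
        rw [hKe3, G.card_neighborFinset_eq_degree vm, humax, hΔ]
      have hux : G.Adj vm x := (mem_neighborFinset _ _ _).1 (by rw [hNu]; simp)
      have huy : G.Adj vm y := (mem_neighborFinset _ _ _).1 (by rw [hNu]; simp)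
      have huz : G.Adj vm z := (mem_neighborFinset _ _ _).1 (by rw [hNu]; simp)
      have hKfull : maxSet G = insert vm {x, y, z} := by
        rw [← hKe, insert_erase hKne]
      have hdegx : G.degree x = G.maxDegree := by
        have : x ∈ maxSet G := by rw [hKfull]; simp
        exact mem_maxSet.1 this
      have hdegy : G.degree y = G.maxDegree := by
        have : y ∈ maxSet G := by rw [hKfull]; simp
        exact mem_maxSet.1 this
      have hNx : G.neighborFinset x = {vm, y, z} := by
        apply eq_of_subset_of_card_le
        · intro t ht
          have h1 := hNsub x ht
          rw [hKfull, mem_erase] at h1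
          have h2 := h1.2
          simp only [mem_insert, mem_singleton] at h2 ⊢
          rcases h2 with rfl | rfl | rfl | rfl
          · tauto
          · exact absurd rfl h1.1
          · tauto
          · tauto
        · rw [G.card_neighborFinset_eq_degree x, hdegx, hΔ,
            card_insert_of_notMem (by simp [Ne.symm hyu, Ne.symm hzu]),
            card_insert_of_notMem (by simp [hyz]), card_singleton]
      have hxy' : G.Adj x y := (mem_neighborFinset _ _ _).1 (by rw [hNx]; simp)
      have hxz' : G.Adj x z := (mem_neighborFinset _ _ _).1 (by rw [hNx]; simp)
      have hNy : G.neighborFinset y = {vm, x, z} := by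
        apply eq_of_subset_of_card_le
        · intro t ht
          have h1 := hNsub y ht
          rw [hKfull, mem_erase] at h1
          have h2 := h1.2
          simp only [mem_insert, mem_singleton] at h2 ⊢
          rcases h2 with rfl | rfl | rfl | rfl
          · tauto
          · tauto
          · exact absurd rfl h1.1
          · tauto
        · rw [G.card_neighborFinset_eq_degree y, hdegy, hΔ,
            card_insert_of_notMem (by simp [Ne.symm hxu, Ne.symm hzu]),
            card_insert_of_notMem (by simp [hxz]), card_singleton]
      have hyz' : G.Adj y z := (mem_neighborFinset _ _ _).1 (by rw [hNy]; simp)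
      obtain ⟨P, hP, hPc⟩ := good_mk3 G ((SimpleGraph.mem_edgeSet G).2 hux)
        ((SimpleGraph.mem_edgeSet G).2 hyz') ((SimpleGraph.mem_edgeSet G).2 huy)
        ((SimpleGraph.mem_edgeSet G).2 hxz') ((SimpleGraph.mem_edgeSet G).2 huz)
        ((SimpleGraph.mem_edgeSet G).2 hxy')
        (indep_of_avoid (by simp [hyu, Ne.symm hxy]) (by simp [hzu, Ne.symm hxz]))
        (indep_of_avoid (by simp [hxu, hxy]) (by simp [hzu, Ne.symm hyz]))
        (indep_of_avoid (by simp [hxu, hxz]) (by simp [hyu, hyz]))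
        (by simp [Sym2.eq_iff, hxy, Ne.symm hyu])
        (by simp [Sym2.eq_iff, Ne.symm hxu, Ne.symm hzu])
        (by simp [Sym2.eq_iff, hyu, hzu])
        (by simp [Sym2.eq_iff, Ne.symm hxy, hyz])
        (by simp [Sym2.eq_iff, hxz, Ne.symm hzu])
        (by simp [Sym2.eq_iff, Ne.symm hxu, Ne.symm hyu])
        (by simp [Sym2.eq_iff, hyu, hyz])
        (by simp [Sym2.eq_iff, Ne.symm hxy, Ne.symm hxz])
        (by simp [Sym2.eq_iff, hyz, Ne.symm hzu])
        (by simp [Sym2.eq_iff, Ne.symm hxu, Ne.symm hyu])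
        (by simp [Sym2.eq_iff, hxu, hxz])
        (by simp [Sym2.eq_iff, Ne.symm hyz, hxy])
      exact ⟨P, hP, by rw [hPc, hm', hΔ]; decide⟩

theorem main : ∀ (n : ℕ) (G : SimpleGraph V) [inst : DecidableRel G.Adj],
    (#G.edgeFinset) ≤ n →
    (∃ P : Finset (Finset (Sym2 V)), Good G P ∧
      P.card = min (#G.edgeFinset / 2) (#G.edgeFinset - G.maxDegree)) ∨ Except' G := by
  intro n
  induction n using Nat.strong_induction_on with
  | _ n IH =>
  intro G inst hn
  by_cases ht0 : min (#G.edgeFinset / 2) (#G.edgeFinset - G.maxDegree) = 0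
  · exact Or.inl ⟨∅, ⟨by simp, by simp⟩, by rw [card_empty]; exact ht0.symm⟩
  have htpos : 0 < min (#G.edgeFinset / 2) (#G.edgeFinset - G.maxDegree) :=
    Nat.pos_of_ne_zero ht0
  rw [lt_min_iff] at htpos
  have hm2 : 2 ≤ #G.edgeFinset := by
    have := htpos.1
    omega
  have hΔm : G.maxDegree + 1 ≤ #G.edgeFinset := by
    have := htpos.2
    omega
  have hΔle : G.maxDegree ≤ #G.edgeFinset := maxDegree_le_card_edges G
  -- find a suitable independent pair (or finish directly)
  have hpair : (∃ e f : Sym2 V, e ∈ G.edgeSet ∧ f ∈ G.edgeSet ∧ Indep e f ∧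
      (2 * G.maxDegree + 1 ≤ #G.edgeFinset ∨
        ∀ z : V, G.degree z = G.maxDegree → (z ∈ e ∨ z ∈ f))) ∨ Except' G ∨
      (∃ P : Finset (Finset (Sym2 V)), Good G P ∧
        P.card = min (#G.edgeFinset / 2) (#G.edgeFinset - G.maxDegree)) := by
    by_cases hC : 2 * G.maxDegree + 1 ≤ #G.edgeFinset
    · obtain ⟨e0, he0⟩ : G.edgeFinset.Nonempty := card_pos.1 (by omega)
      obtain ⟨f0, hf0, hind0⟩ := exists_indep_partner G (by omega) (mem_edgeFinset.1 he0)
      exact Or.inl ⟨e0, f0, mem_edgeFinset.1 he0, hf0, hind0, Or.inl hC⟩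
    · rcases coverPair G (by omega) hm2 hΔm with ⟨e, f, he, hf, hind, hcov⟩ | hex | hP
      · exact Or.inl ⟨e, f, he, hf, hind, Or.inr hcov⟩
      · exact Or.inr (Or.inl hex)
      · exact Or.inr (Or.inr hP)
  rcases hpair with ⟨e, f, he, hf, hind, hOr⟩ | hex | hP
  swap
  · exact Or.inr hex
  swap
  · exact Or.inl hP
  -- delete the pair and recurse
  letI instD := delInst G ({e, f} : Finset (Sym2 V))
  have hefne : e ≠ f := hind.ne
  have hsubEF : ({e, f} : Finset (Sym2 V)) ⊆ G.edgeFinset := by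
    intro x hx
    simp only [mem_insert, mem_singleton] at hx
    rcases hx with rfl | rfl
    exacts [mem_edgeFinset.2 he, mem_edgeFinset.2 hf]
  have hE' : (G.deleteEdges (↑({e, f} : Finset (Sym2 V)) : Set (Sym2 V))).edgeFinset =
      G.edgeFinset \ {e, f} := edgeFinset_del G {e, f}
  have hcardEF : #({e, f} : Finset (Sym2 V)) = 2 := by
    rw [card_insert_of_notMem (by simp [hefne]), card_singleton]
  have hcard' : #(G.deleteEdges (↑({e, f} : Finset (Sym2 V)) : Set (Sym2 V))).edgeFinset =
      (#G.edgeFinset) - 2 := by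
    rw [hE', card_sdiff_of_subset hsubEF, hcardEF]
  have hdegz : ∀ z : V,
      (G.deleteEdges (↑({e, f} : Finset (Sym2 V)) : Set (Sym2 V))).degree z +
        (min (#G.edgeFinset / 2) (#G.edgeFinset - G.maxDegree)) + 1 ≤ #G.edgeFinset := by
    intro z
    have hminle1 : min (#G.edgeFinset / 2) (#G.edgeFinset - G.maxDegree) ≤
        (#G.edgeFinset) / 2 := min_le_left _ _
    have hminle2 : min (#G.edgeFinset / 2) (#G.edgeFinset - G.maxDegree) ≤
        (#G.edgeFinset) - G.maxDegree := min_le_right _ _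
    have hdle := degree_del_le G ({e, f} : Finset (Sym2 V)) z
    have hzΔ := G.degree_le_maxDegree z
    by_cases hzmax : G.degree z = G.maxDegree
    · rcases hOr with hC | hcov
      · omega
      · rcases hcov z hzmax with hze | hzf
        · have := degree_del_lt G ({e, f} : Finset (Sym2 V)) he (by simp) hze
          omega
        · have := degree_del_lt G ({e, f} : Finset (Sym2 V)) hf (by simp) hzf
          omega
    · omega
  have hmax' : (G.deleteEdges (↑({e, f} : Finset (Sym2 V)) : Set (Sym2 V))).maxDegree +
      (min (#G.edgeFinset / 2) (#G.edgeFinset - G.maxDegree)) + 1 ≤ #G.edgeFinset := by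
    have h1 := maxDegree_le_of_forall_degree_le
      (G := G.deleteEdges (↑({e, f} : Finset (Sym2 V)) : Set (Sym2 V)))
      (#G.edgeFinset - (min (#G.edgeFinset / 2) (#G.edgeFinset - G.maxDegree)) - 1)
      (fun v => by have := hdegz v; omega)
    omega
  have hlt : #(G.deleteEdges (↑({e, f} : Finset (Sym2 V)) : Set (Sym2 V))).edgeFinset < n := by
    omega
  rcases IH _ hlt (G.deleteEdges (↑({e, f} : Finset (Sym2 V)) : Set (Sym2 V))) le_rfl with
    ⟨P', hP'good, hP'card⟩ | hexc'
  · -- extend the packing of G'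
    have htle : min (#G.edgeFinset / 2) (#G.edgeFinset - G.maxDegree) - 1 ≤ #P' := by
      rw [hP'card, hcard']
      rw [Nat.le_min]
      constructor
      · have : min (#G.edgeFinset / 2) (#G.edgeFinset - G.maxDegree) ≤
            (#G.edgeFinset) / 2 := min_le_left _ _
        omega
      · omega
    obtain ⟨P'', hsub'', hcard''⟩ := exists_subset_card_eq (s := P')
      (n := min (#G.edgeFinset / 2) (#G.edgeFinset - G.maxDegree) - 1) htle
    have hnotin : ∀ s ∈ P'', e ∉ s ∧ f ∉ s := by
      intro s hs
      obtain ⟨e', f', he', hf', _, _, rfl⟩ := hP'good.1 s (hsub'' hs)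
      rw [edgeSet_deleteEdges] at he' hf'
      constructor
      · intro hmem
        simp only [mem_insert, mem_singleton] at hmem
        rcases hmem with rfl | rfl
        · exact he'.2 (by simp)
        · exact hf'.2 (by simp)
      · intro hmem
        simp only [mem_insert, mem_singleton] at hmem
        rcases hmem with rfl | rfl
        · exact he'.2 (by simp)
        · exact hf'.2 (by simp)
    have hnew : ({e, f} : Finset (Sym2 V)) ∉ P'' := by
      intro hc
      exact (hnotin _ hc).1 (by simp)
    refine Or.inl ⟨insert ({e, f} : Finset (Sym2 V)) P'', ⟨?_, ?_⟩, ?_⟩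
    · intro s hs
      rcases mem_insert.1 hs with rfl | hs'
      · exact ⟨e, f, he, hf, hefne, hind, rfl⟩
      · exact isEdgePair_mono (deleteEdges_le _) (hP'good.1 s (hsub'' hs'))
    · intro a ha b hb hab
      rw [coe_insert, Set.mem_insert_iff] at ha hb
      have hdisj : ∀ b' ∈ P'', Disjoint ({e, f} : Finset (Sym2 V)) b' := by
        intro b' hb'
        rw [Finset.disjoint_left]
        intro x hx
        simp only [mem_insert, mem_singleton] at hx
        rcases hx with rfl | rfl
        exacts [(hnotin b' hb').1, (hnotin b' hb').2]
      rcases ha with rfl | ha' <;> rcases hb with rfl | hb'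
      · exact absurd rfl hab
      · exact hdisj b hb'
      · exact (hdisj a ha').symm
      · exact hP'good.2 (mem_coe.2 (hsub'' ha')) (mem_coe.2 (hsub'' hb')) hab
    · rw [card_insert_of_notMem hnew, hcard'']
      omega
  · -- G' is exceptional: small direct constructions
    have heE' : e ∉ (G.deleteEdges (↑({e, f} : Finset (Sym2 V)) : Set (Sym2 V))).edgeFinset := by
      rw [hE']
      simp
    have hfE' : f ∉ (G.deleteEdges (↑({e, f} : Finset (Sym2 V)) : Set (Sym2 V))).edgeFinset := by
      rw [hE']
      simp
    have hEunion : G.edgeFinset =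
        (G.deleteEdges (↑({e, f} : Finset (Sym2 V)) : Set (Sym2 V))).edgeFinset ∪ {e, f} := by
      rw [hE', sdiff_union_of_subset hsubEF]
    rcases hexc' with ⟨a, b, c, hab, hac, hbc, hset⟩ |
      ⟨a, b, c, d, e', hab, hac, hbc, hde, hdT, heT, hset⟩
    · -- G' = triangle
      have hE'fin : (G.deleteEdges (↑({e, f} : Finset (Sym2 V)) : Set (Sym2 V))).edgeFinset =
          {s(a, b), s(a, c), s(b, c)} := by
        apply Finset.coe_injective
        rw [coe_edgeFinset, hset]
        simp
      have heT3 : e ∉ ({s(a, b), s(a, c), s(b, c)} : Finset (Sym2 V)) := hE'fin ▸ heE'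
      have hfT3 : f ∉ ({s(a, b), s(a, c), s(b, c)} : Finset (Sym2 V)) := hE'fin ▸ hfE'
      simp only [mem_insert, mem_singleton, not_or] at heT3 hfT3
      have hEfin : G.edgeFinset = {s(a, b), s(a, c), s(b, c), e, f} := by
        rw [hEunion, hE'fin,
          show ({s(a, b), s(a, c), s(b, c)} : Finset (Sym2 V)) =
            insert s(a, b) (insert s(a, c) (insert s(b, c) ∅)) from rfl,
          insert_union, insert_union, insert_union, empty_union]
      exact Or.inl (sitI G hab hac hbc he hf hind hefne heT3.1 heT3.2.1 heT3.2.2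
        hfT3.1 hfT3.2.1 hfT3.2.2 hEfin)
    · -- G' = triangle plus disjoint edge
      simp only [Set.mem_insert_iff, Set.mem_singleton_iff, not_or] at hdT heT
      have hE'fin : (G.deleteEdges (↑({e, f} : Finset (Sym2 V)) : Set (Sym2 V))).edgeFinset =
          {s(a, b), s(a, c), s(b, c), s(d, e')} := by
        apply Finset.coe_injective
        rw [coe_edgeFinset, hset]
        simp
      have heT4 : e ∉ ({s(a, b), s(a, c), s(b, c), s(d, e')} : Finset (Sym2 V)) :=
        hE'fin ▸ heE'
      have hfT4 : f ∉ ({s(a, b), s(a, c), s(b, c), s(d, e')} : Finset (Sym2 V)) :=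
        hE'fin ▸ hfE'
      simp only [mem_insert, mem_singleton, not_or] at heT4 hfT4
      have hgE : s(d, e') ∈ G.edgeSet := by
        have : s(d, e') ∈ (G.deleteEdges (↑({e, f} : Finset (Sym2 V)) : Set (Sym2 V))).edgeFinset := by
          rw [hE'fin]
          simp
        exact edgeSet_mono (deleteEdges_le _) (mem_edgeFinset.1 this)
      have hga : a ∉ s(d, e') := by
        rw [Sym2.mem_iff]
        rintro (rfl | rfl)
        exacts [hdT.1 rfl, heT.1 rfl]
      have hgb : b ∉ s(d, e') := by
        rw [Sym2.mem_iff]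
        rintro (rfl | rfl)
        exacts [hdT.2.1 rfl, heT.2.1 rfl]
      have hgc : c ∉ s(d, e') := by
        rw [Sym2.mem_iff]
        rintro (rfl | rfl)
        exacts [hdT.2.2 rfl, heT.2.2 rfl]
      have hEfin : G.edgeFinset = {s(a, b), s(a, c), s(b, c), s(d, e'), e, f} := by
        rw [hEunion, hE'fin,
          show ({s(a, b), s(a, c), s(b, c), s(d, e')} : Finset (Sym2 V)) =
            insert s(a, b) (insert s(a, c) (insert s(b, c) (insert s(d, e') ∅))) from rfl,
          insert_union, insert_union, insert_union, insert_union, empty_union]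
      exact Or.inl (sitII G hab hac hbc he hf hgE hind hefne (Ne.symm heT4.2.2.2)
        (Ne.symm hfT4.2.2.2) hga hgb hgc heT4.1 heT4.2.1 heT4.2.2.1
        hfT4.1 hfT4.2.1 hfT4.2.2.1 hEfin)

lemma pair_card_two {G : SimpleGraph V} {s : Finset (Sym2 V)} (h : IsEdgePair G s) :
    (#s) = 2 := by
  obtain ⟨e, f, _, _, hef, _, rfl⟩ := h
  rw [card_insert_of_notMem (by simp [hef]), card_singleton]

lemma pair_subset {G : SimpleGraph V} [DecidableRel G.Adj] {s : Finset (Sym2 V)}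
    (h : IsEdgePair G s) : s ⊆ G.edgeFinset := by
  obtain ⟨e, f, he, hf, _, _, rfl⟩ := h
  intro x hx
  simp only [mem_insert, mem_singleton] at hx
  rcases hx with rfl | rfl
  exacts [mem_edgeFinset.2 he, mem_edgeFinset.2 hf]

lemma upper1 (G : SimpleGraph V) [DecidableRel G.Adj] (P : Finset (Finset (Sym2 V)))
    (h1 : ∀ s ∈ P, IsEdgePair G s)
    (h2 : (P : Set (Finset (Sym2 V))).PairwiseDisjoint id) :
    2 * #P ≤ #G.edgeFinset := by
  have hb : #(P.biUnion id) = ∑ s ∈ P, #(id s) :=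
    card_biUnion (fun x hx y hy hne => h2 (mem_coe.2 hx) (mem_coe.2 hy) hne)
  have hsum : ∑ s ∈ P, #(id s) = 2 * #P := by
    calc ∑ s ∈ P, #(id s) = ∑ _s ∈ P, 2 :=
        sum_congr rfl (fun s hs => pair_card_two (h1 s hs))
    _ = 2 * #P := by rw [sum_const, smul_eq_mul, mul_comm]
  have hsub : P.biUnion id ⊆ G.edgeFinset := by
    intro x hx
    obtain ⟨s, hs, hxs⟩ := mem_biUnion.1 hx
    exact pair_subset (h1 s hs) hxs
  have := card_le_card hsub
  omega

lemma upper2 (G : SimpleGraph V) [DecidableRel G.Adj] (P : Finset (Finset (Sym2 V)))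
    (h1 : ∀ s ∈ P, IsEdgePair G s)
    (h2 : (P : Set (Finset (Sym2 V))).PairwiseDisjoint id) :
    (#P) ≤ #G.edgeFinset - G.maxDegree := by
  by_cases hΔ : G.maxDegree = 0
  · have hP0 : P = ∅ := by
      rcases Finset.eq_empty_or_nonempty P with h | ⟨s, hs⟩
      · exact h
      · exfalso
        obtain ⟨e, f, he, _, _, _, rfl⟩ := h1 s hs
        obtain ⟨x, y, hxy, rfl⟩ := exists_rep he
        have hh := one_le_degree_of_mem he (by simp : x ∈ s(x, y))
        have := G.degree_le_maxDegree x
        omega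
    simp [hP0]
  have hVne : Nonempty V := by
    rcases isEmpty_or_nonempty V with h | h
    · exfalso
      apply hΔ
      simp [SimpleGraph.maxDegree, Finset.univ_eq_empty]
    · exact h
  obtain ⟨v, hv⟩ := G.exists_maximal_degree_vertex
  have key : ∀ s ∈ P, (s \ G.incidenceFinset v).Nonempty := by
    intro s hs
    obtain ⟨e, f, he, hf, hef, hind, rfl⟩ := h1 s hs
    by_cases hve : v ∈ e
    · have hvf : v ∉ f := fun hvf => hind v ⟨hve, hvf⟩
      exact ⟨f, mem_sdiff.2 ⟨by simp, fun hc => hvf ((mem_incF G).1 hc).2⟩⟩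
    · exact ⟨e, mem_sdiff.2 ⟨by simp, fun hc => hve ((mem_incF G).1 hc).2⟩⟩
  have hb : #(P.biUnion (fun s => s \ G.incidenceFinset v)) =
      ∑ s ∈ P, #(s \ G.incidenceFinset v) := by
    apply card_biUnion
    intro x hx y hy hne
    exact (h2 (mem_coe.2 hx) (mem_coe.2 hy) hne).mono sdiff_le sdiff_le
  have hsum : #P ≤ ∑ s ∈ P, #(s \ G.incidenceFinset v) := by
    calc #P = ∑ _s ∈ P, 1 := by rw [sum_const, smul_eq_mul, mul_one]
    _ ≤ ∑ s ∈ P, #(s \ G.incidenceFinset v) :=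
      sum_le_sum (fun s hs => card_pos.2 (key s hs))
  have hsub : P.biUnion (fun s => s \ G.incidenceFinset v) ⊆
      G.edgeFinset \ G.incidenceFinset v := by
    intro x hx
    obtain ⟨s, hs, hxs⟩ := mem_biUnion.1 hx
    rw [mem_sdiff] at hxs ⊢
    exact ⟨pair_subset (h1 s hs) hxs.1, hxs.2⟩
  have hcard := card_le_card hsub
  rw [card_sdiff_of_subset (incF_subset G v), G.card_incidenceFinset_eq_degree v, ← hv] at hcard
  omega

end EPP

/-- Let `G` be a graph that is not a triangle plus isolated vertices and not a triangle
plus an isolated edge plus isolated vertices. Then the maximum number of pairwise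
edge-disjoint edge-pairs in `G` is `⌊|E(G)|/2⌋` if `|E(G)| ≥ 2Δ(G)`, and `|E(G)| − Δ(G)`
otherwise. -/
theorem statement_9 {V : Type*} [Fintype V] [DecidableEq V] (G : SimpleGraph V)
    [DecidableRel G.Adj]
    (h1 : ¬ ∃ a b c : V, a ≠ b ∧ a ≠ c ∧ b ≠ c ∧
        G.edgeSet = {s(a, b), s(a, c), s(b, c)})
    (h2 : ¬ ∃ a b c d e : V, a ≠ b ∧ a ≠ c ∧ b ≠ c ∧ d ≠ e ∧
        d ∉ ({a, b, c} : Set V) ∧ e ∉ ({a, b, c} : Set V) ∧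
        G.edgeSet = {s(a, b), s(a, c), s(b, c), s(d, e)}) :
    (∃ P : Finset (Finset (Sym2 V)),
        (∀ s ∈ P, IsEdgePair G s) ∧ (P : Set (Finset (Sym2 V))).PairwiseDisjoint id ∧
        P.card = (if 2 * G.maxDegree ≤ G.edgeFinset.card then G.edgeFinset.card / 2
          else G.edgeFinset.card - G.maxDegree)) ∧
    (∀ P : Finset (Finset (Sym2 V)),
        (∀ s ∈ P, IsEdgePair G s) → (P : Set (Finset (Sym2 V))).PairwiseDisjoint id →
        P.card ≤ (if 2 * G.maxDegree ≤ G.edgeFinset.card then G.edgeFinset.card / 2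
          else G.edgeFinset.card - G.maxDegree)) := by
  have hΔle := EPP.maxDegree_le_card_edges G
  constructor
  · rcases EPP.main (#G.edgeFinset) G le_rfl with ⟨P, ⟨hgood1, hgood2⟩, hcard⟩ | hex
    · refine ⟨P, hgood1, hgood2, ?_⟩
      rw [hcard]
      split_ifs with h
      · exact min_eq_left (by omega)
      · exact min_eq_right (by omega)
    · rcases hex with ⟨a, b, c, hab, hac, hbc, hset⟩ |
        ⟨a, b, c, d, e, hab, hac, hbc, hde, hdT, heT, hset⟩
      · exact absurd ⟨a, b, c, hab, hac, hbc, hset⟩ h1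
      · exact absurd ⟨a, b, c, d, e, hab, hac, hbc, hde, hdT, heT, hset⟩ h2
  · intro P hP hdisj
    have u1 := EPP.upper1 G P hP hdisj
    have u2 := EPP.upper2 G P hP hdisj
    split_ifs <;> omega
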